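/- Let u ∈ 𝔻[ω]^n be a unit vector, i.e., an n-dimensional column vector with all entries in 𝔻[ω] and with ‖u‖² = Σ_j |u_j|² = 1. Then there exists a finite sequence U₁, ..., U_h of one- and two-level unitary n×n matrices of types X, H, T, and ω such that U₁⋯U_h·u = e₁, the first standard basis vector. -/

import Mathlib

noncomputable section

/-- The eighth root of unity `ω = e^{iπ/4} = (1+i)/√2`. -/
def ω : ℂ := (1 + Complex.I) / Real.sqrt 2

/-- A rational number is dyadic if it has the form `a / 2^n` with `a ∈ ℤ`, `n ∈ ℕ`. -/
def IsDyadic (q : ℚ) : Prop := ∃ (a : ℤ) (n : ℕ), q = a / 2 ^ n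

/-- Membership in the ring `𝔻[ω] = ℤ[1/√2, i]`: complex numbers of the form
`aω³ + bω² + cω + d` with `a, b, c, d` dyadic rationals. -/
def inDω (t : ℂ) : Prop :=
  ∃ a b c d : ℚ, IsDyadic a ∧ IsDyadic b ∧ IsDyadic c ∧ IsDyadic d ∧
    t = (a : ℂ) * ω ^ 3 + (b : ℂ) * ω ^ 2 + (c : ℂ) * ω + (d : ℂ)

/-- Membership in the ring `ℤ[ω]`: complex numbers of the form
`aω³ + bω² + cω + d` with `a, b, c, d ∈ ℤ`. -/
def inZω (t : ℂ) : Prop :=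
  ∃ a b c d : ℤ, t = (a : ℂ) * ω ^ 3 + (b : ℂ) * ω ^ 2 + (c : ℂ) * ω + (d : ℂ)

/-- The Hadamard gate. -/
def Hmat : Matrix (Fin 2) (Fin 2) ℂ := ((Real.sqrt 2 : ℂ))⁻¹ • !![1, 1; 1, -1]

/-- The phase gate `S`. -/
def Smat : Matrix (Fin 2) (Fin 2) ℂ := !![1, 0; 0, Complex.I]

/-- The `T` gate. -/
def Tmat : Matrix (Fin 2) (Fin 2) ℂ := !![1, 0; 0, ω]

/-- The `X` (not) gate. -/
def Xmat : Matrix (Fin 2) (Fin 2) ℂ := !![0, 1; 1, 0]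

/-- The controlled-not gate, as a matrix on two qubits: it sends `|a,b⟩` to `|a, a+b⟩`. -/
def CNOTmat : Matrix (Fin 2 × Fin 2) (Fin 2 × Fin 2) ℂ :=
  Matrix.of fun p q => if p.1 = q.1 ∧ p.2 = q.1 + q.2 then 1 else 0

/-- The one-level `n×n` matrix `a_[j]` of type `a`: the identity except that the `(j,j)`
entry is `a`. -/
def oneLevel {n : ℕ} (a : ℂ) (j : Fin n) : Matrix (Fin n) (Fin n) ℂ :=
  Matrix.of fun p q => if p = q then (if p = j then a else 1) else 0

/-- The two-level `n×n` matrix `U_[j,l]` of type `U`: the identity except that the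
`(j,j), (j,l), (l,j), (l,l)` entries are those of the `2×2` matrix `U`. -/
def twoLevel {n : ℕ} (U : Matrix (Fin 2) (Fin 2) ℂ) (j l : Fin n) :
    Matrix (Fin n) (Fin n) ℂ :=
  Matrix.of fun p q =>
    if p = j ∧ q = j then U 0 0
    else if p = j ∧ q = l then U 0 1
    else if p = l ∧ q = j then U 1 0
    else if p = l ∧ q = l then U 1 1
    else if p = q then 1 else 0

/-- A one- or two-level matrix of type `X`, `H`, `T` (two-level) or `ω` (one-level). -/
def IsLevelGen {n : ℕ} (M : Matrix (Fin n) (Fin n) ℂ) : Prop :=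
  (∃ j l : Fin n, j ≠ l ∧
      (M = twoLevel Xmat j l ∨ M = twoLevel Hmat j l ∨ M = twoLevel Tmat j l))
  ∨ (∃ j : Fin n, M = oneLevel ω j)

-- ## basic facts about ω and √2

lemma sqrt2_pos : (0:ℝ) < Real.sqrt 2 := Real.sqrt_pos.mpr (by norm_num)

lemma csqrt2_ne : ((Real.sqrt 2 : ℝ) : ℂ) ≠ 0 := by
  exact_mod_cast (ne_of_gt sqrt2_pos)

lemma csqrt2_sq : ((Real.sqrt 2 : ℝ) : ℂ) ^ 2 = 2 := by
  rw [← Complex.ofReal_pow, Real.sq_sqrt (by norm_num : (2:ℝ) ≥ 0)]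
  norm_num

lemma omega_mul_sqrt2 : ω * ((Real.sqrt 2 : ℝ) : ℂ) = 1 + Complex.I := by
  rw [ω, div_mul_cancel₀]; exact csqrt2_ne

lemma omega_sq : ω ^ 2 = Complex.I := by
  have h : (ω * ((Real.sqrt 2 : ℝ) : ℂ)) ^ 2 = (1 + Complex.I) ^ 2 := by
    rw [omega_mul_sqrt2]
  rw [mul_pow, csqrt2_sq] at h
  have h2 : (1 + Complex.I) ^ 2 = Complex.I * 2 := by
    ring_nf
    rw [Complex.I_sq]; ring
  rw [h2] at h
  exact mul_right_cancel₀ (two_ne_zero) h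

lemma omega_pow4 : ω ^ 4 = -1 := by
  have : ω ^ 4 = (ω ^ 2) ^ 2 := by ring
  rw [this, omega_sq, Complex.I_sq]

lemma omega_pow8 : ω ^ 8 = 1 := by
  have : ω ^ 8 = (ω ^ 4) ^ 2 := by ring
  rw [this, omega_pow4]; ring

-- ## the ring ℤ[ω] as quadruples

structure Zw where
  a : ℤ
  b : ℤ
  c : ℤ
  d : ℤ

namespace Zw

def φ (x : Zw) : ℂ := (x.a : ℂ) * ω ^ 3 + (x.b : ℂ) * ω ^ 2 + (x.c : ℂ) * ω + (x.d : ℂ)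

def zero : Zw := ⟨0,0,0,0⟩

def add (x y : Zw) : Zw := ⟨x.a + y.a, x.b + y.b, x.c + y.c, x.d + y.d⟩
def sub (x y : Zw) : Zw := ⟨x.a - y.a, x.b - y.b, x.c - y.c, x.d - y.d⟩

/-- multiplication by ω -/
def mw (x : Zw) : Zw := ⟨x.b, x.c, x.d, -x.a⟩

/-- multiplication by √2 -/
def sig (x : Zw) : Zw := ⟨x.b - x.d, x.a + x.c, x.b + x.d, x.c - x.a⟩

/-- division by √2 (valid when sdvd holds) -/
def hdiv (x : Zw) : Zw := ⟨(x.b - x.d)/2, (x.a + x.c)/2, (x.b + x.d)/2, (x.c - x.a)/2⟩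

def A (x : Zw) : ℤ := x.a^2 + x.b^2 + x.c^2 + x.d^2
def B (x : Zw) : ℤ := x.a*x.b + x.b*x.c + x.c*x.d - x.a*x.d

lemma φ_add (x y : Zw) : φ (add x y) = φ x + φ y := by
  simp only [φ, add]; push_cast; ring

lemma φ_sub (x y : Zw) : φ (sub x y) = φ x - φ y := by
  simp only [φ, sub]; push_cast; ring


lemma s_eq : ((Real.sqrt 2 : ℝ) : ℂ) = ω - ω^3 := by
  have h3 : ω^3 = ω^2 * ω := by ring
  rw [h3, omega_sq, ω]
  field_simp
  linear_combination Complex.I_sq + csqrt2_sq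

lemma φ_mw (x : Zw) : φ (mw x) = ω * φ x := by
  simp only [φ, mw]
  push_cast
  linear_combination (-(x.a:ℂ)) * omega_pow4

lemma φ_sig (x : Zw) : φ (sig x) = ((Real.sqrt 2 : ℝ) : ℂ) * φ x := by
  simp only [φ, sig, s_eq]
  push_cast
  linear_combination ((x.a:ℂ)*ω^2 + (x.b:ℂ)*ω + ((x.c:ℂ)-(x.a:ℂ))) * omega_pow4

def dag (x : Zw) : Zw := ⟨-x.c, -x.b, -x.a, x.d⟩

lemma conj_omega : (starRingEnd ℂ) ω = -ω^3 := by
  have h3 : ω^3 = ω^2 * ω := by ring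
  rw [h3, omega_sq, ω]
  simp [map_div₀, Complex.conj_I]
  field_simp
  linear_combination Complex.I_sq

lemma φ_dag (x : Zw) : φ (dag x) = (starRingEnd ℂ) (φ x) := by
  have hc := conj_omega
  simp only [φ, dag, map_add, map_mul, map_pow, map_intCast, hc]
  push_cast
  linear_combination ((x.a:ℂ)*ω*(ω^4-1) - (x.b:ℂ)*ω^2) * omega_pow4

lemma φ_mul_dag (x : Zw) : φ x * φ (dag x) = φ ⟨-(B x), 0, B x, A x⟩ := by
  simp only [φ, dag, A, B]
  push_cast
  linear_combination (-(x.a*x.c:ℂ)*ω^2 - ((x.a:ℂ)*x.b+(x.b:ℂ)*x.c)*ω - ((x.a:ℂ)^2+(x.b:ℂ)^2+(x.c:ℂ)^2)) * omega_pow4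

lemma normSq_φ (x : Zw) : (Complex.normSq (φ x) : ℝ) = (A x : ℝ) + (B x : ℝ) * Real.sqrt 2 := by
  have h := φ_mul_dag x
  rw [φ_dag, Complex.mul_conj] at h
  have h2 : (φ ⟨-(B x), 0, B x, A x⟩ : ℂ) = ((A x : ℝ) + (B x : ℝ) * Real.sqrt 2 : ℝ) := by
    simp only [φ]
    push_cast
    rw [s_eq]
    ring
  rw [h2] at h
  exact_mod_cast h

-- ## parity layer

abbrev Q2 := ZMod 2 × ZMod 2 × ZMod 2 × ZMod 2

def pr (x : Zw) : Q2 := ((x.a : ZMod 2), (x.b : ZMod 2), (x.c : ZMod 2), (x.d : ZMod 2))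

def S2 (r : Q2) : Prop := r.1 + r.2.2.1 = 0 ∧ r.2.1 + r.2.2.2 = 0
def V0 (r : Q2) : Prop := r.1 + r.2.1 + r.2.2.1 + r.2.2.2 = 1
def V1 (r : Q2) : Prop := r.1 + r.2.2.1 = 1 ∧ r.2.1 + r.2.2.2 = 1

instance : DecidablePred S2 := fun _ => inferInstanceAs (Decidable (_ ∧ _))
instance : DecidablePred V0 := fun _ => inferInstanceAs (Decidable (_ = _))
instance : DecidablePred V1 := fun _ => inferInstanceAs (Decidable (_ ∧ _))

def shft (r : Q2) : Q2 := (r.2.1, r.2.2.1, r.2.2.2, r.1)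

/-- the condition for divisibility by √2 -/
def sdvd (x : Zw) : Prop := S2 (pr x)

lemma zmod2_neg : ∀ z : ZMod 2, -z = z := by decide
lemma zmod2_add_self : ∀ z : ZMod 2, z + z = 0 := by decide

lemma pr_mw (x : Zw) : pr (mw x) = shft (pr x) := by
  simp only [pr, mw, shft, Int.cast_neg, zmod2_neg]

lemma pr_add (x y : Zw) : pr (add x y) = pr x + pr y := by
  simp only [pr, add, Prod.mk_add_mk, Int.cast_add]

lemma zmod2_sub (p q : ZMod 2) : p - q = p + q := by revert p q; decide

lemma pr_sub (x y : Zw) : pr (sub x y) = pr x + pr y := by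
  simp only [pr, sub, Int.cast_sub, Prod.mk_add_mk, zmod2_sub]

-- decidable residue facts
lemma D1 : ∀ r s : Q2, V1 r → V1 s →
    r = s ∨ r = shft s ∨ r = shft (shft s) ∨ r = shft (shft (shft s)) := by
  have key : ∀ r s : Q2, ¬ V1 r ∨ ¬ V1 s ∨
      (r = s ∨ r = shft s ∨ r = shft (shft s) ∨ r = shft (shft (shft s))) := by decide
  intro r s h1 h2
  rcases key r s with h | h | h
  · exact absurd h1 h
  · exact absurd h2 h
  · exact h

def D2body (r s : Q2) : Prop :=
  (r = s ∨ r = shft s ∨ r = shft (shft s) ∨ r = shft (shft (shft s)))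
    ∨ (r + s = (1,1,1,1) ∨ r + shft s = (1,1,1,1) ∨ r + shft (shft s) = (1,1,1,1)
        ∨ r + shft (shft (shft s)) = (1,1,1,1))

instance D2body.dec : ∀ r s : Q2, Decidable (D2body r s) := fun r s => by
  unfold D2body; infer_instance

lemma D2 : ∀ r s : Q2, V0 r → V0 s →
    (r = s ∨ r = shft s ∨ r = shft (shft s) ∨ r = shft (shft (shft s)))
    ∨ (r + s = (1,1,1,1) ∨ r + shft s = (1,1,1,1) ∨ r + shft (shft s) = (1,1,1,1)
        ∨ r + shft (shft (shft s)) = (1,1,1,1)) := by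
  have key : ∀ r s : Q2, ¬ V0 r ∨ ¬ V0 s ∨ D2body r s := by decide
  unfold D2body at key
  intro r s h1 h2
  rcases key r s with h | h | h
  · exact absurd h1 h
  · exact absurd h2 h
  · exact h

lemma Dtri : ∀ r : Q2, S2 r ∨ V0 r ∨ V1 r := by decide

-- integer-level division facts
lemma sdvd_dvd {x : Zw} (h : sdvd x) : 2 ∣ x.a + x.c ∧ 2 ∣ x.b + x.d := by
  obtain ⟨h1, h2⟩ := h
  simp only [pr] at h1 h2
  constructor
  · have : ((x.a + x.c : ℤ) : ZMod 2) = 0 := by push_cast; exact h1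
    exact_mod_cast (ZMod.intCast_zmod_eq_zero_iff_dvd _ 2).mp this
  · have : ((x.b + x.d : ℤ) : ZMod 2) = 0 := by push_cast; exact h2
    exact_mod_cast (ZMod.intCast_zmod_eq_zero_iff_dvd _ 2).mp this

lemma sig_hdiv {x : Zw} (h : sdvd x) : sig (hdiv x) = x := by
  obtain ⟨h1, h2⟩ := sdvd_dvd h
  cases x with
  | mk a b c d =>
    simp only [sig, hdiv] at *
    congr 1 <;> omega

lemma hdiv_sum_ac {x : Zw} (h : sdvd x) : (hdiv x).a + (hdiv x).c = x.b := by
  obtain ⟨h1, h2⟩ := sdvd_dvd h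
  simp only [hdiv]; omega

lemma hdiv_sum_bd {x : Zw} (h : sdvd x) : (hdiv x).b + (hdiv x).d = x.c := by
  obtain ⟨h1, h2⟩ := sdvd_dvd h
  simp only [hdiv]; omega

lemma sdvd_of_pr_zero {x : Zw} (h : pr x = ((0:ZMod 2),(0:ZMod 2),(0:ZMod 2),(0:ZMod 2))) :
    sdvd x := by
  simp only [pr, Prod.mk.injEq] at h
  obtain ⟨h1, h2, h3, h4⟩ := h
  exact ⟨by simp only [pr, h1, h3]; ring, by simp only [pr, h2, h4]; ring⟩

lemma sdvd_hdiv_of_pr_zero {x : Zw} (h : pr x = ((0:ZMod 2),(0:ZMod 2),(0:ZMod 2),(0:ZMod 2))) :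
    sdvd (hdiv x) := by
  have hs := sdvd_of_pr_zero h
  simp only [pr, Prod.mk.injEq] at h
  obtain ⟨h1, h2, h3, h4⟩ := h
  constructor
  · have e := hdiv_sum_ac hs
    have e2 : (((hdiv x).a + (hdiv x).c : ℤ) : ZMod 2) = ((x.b : ℤ) : ZMod 2) := by rw [e]
    push_cast at e2
    show ((hdiv x).a : ZMod 2) + ((hdiv x).c : ZMod 2) = 0
    rw [e2]; exact h2
  · have e := hdiv_sum_bd hs
    have e2 : (((hdiv x).b + (hdiv x).d : ℤ) : ZMod 2) = ((x.c : ℤ) : ZMod 2) := by rw [e]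
    push_cast at e2
    show ((hdiv x).b : ZMod 2) + ((hdiv x).d : ZMod 2) = 0
    rw [e2]; exact h3

lemma sdvd_of_pr_ones {x : Zw} (h : pr x = ((1:ZMod 2),(1:ZMod 2),(1:ZMod 2),(1:ZMod 2))) :
    sdvd x := by
  simp only [pr, Prod.mk.injEq] at h
  obtain ⟨h1, h2, h3, h4⟩ := h
  exact ⟨by simp only [pr, h1, h3]; decide, by simp only [pr, h2, h4]; decide⟩

lemma v1_hdiv_of_pr_ones {x : Zw} (h : pr x = ((1:ZMod 2),(1:ZMod 2),(1:ZMod 2),(1:ZMod 2))) :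
    V1 (pr (hdiv x)) := by
  have hs := sdvd_of_pr_ones h
  simp only [pr, Prod.mk.injEq] at h
  obtain ⟨h1, h2, h3, h4⟩ := h
  constructor
  · have e := hdiv_sum_ac hs
    have e2 : (((hdiv x).a + (hdiv x).c : ℤ) : ZMod 2) = ((x.b : ℤ) : ZMod 2) := by rw [e]
    push_cast at e2
    show ((hdiv x).a : ZMod 2) + ((hdiv x).c : ZMod 2) = 1
    rw [e2]; exact h2
  · have e := hdiv_sum_bd hs
    have e2 : (((hdiv x).b + (hdiv x).d : ℤ) : ZMod 2) = ((x.c : ℤ) : ZMod 2) := by rw [e]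
    push_cast at e2
    show ((hdiv x).b : ZMod 2) + ((hdiv x).d : ZMod 2) = 1
    rw [e2]; exact h3

-- ## A and B arithmetic

lemma A_mw (x : Zw) : A (mw x) = A x := by simp only [A, mw]; ring
lemma B_mw (x : Zw) : B (mw x) = B x := by simp only [B, mw]; ring

lemma A_sig (x : Zw) : A (sig x) = 2 * A x := by simp only [A, sig]; ring
lemma B_sig (x : Zw) : B (sig x) = 2 * B x := by simp only [B, sig]; ring

lemma A_para (x y : Zw) : A (add x y) + A (sub x y) = 2 * A x + 2 * A y := by
  simp only [A, add, sub]; ring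

lemma B_para (x y : Zw) : B (add x y) + B (sub x y) = 2 * B x + 2 * B y := by
  simp only [B, add, sub]; ring

lemma A_nonneg (x : Zw) : 0 ≤ A x := by simp only [A]; positivity

lemma A_eq_zero {x : Zw} (h : A x = 0) : φ x = 0 := by
  simp only [A] at h
  have ha : x.a ^ 2 = 0 := by nlinarith [sq_nonneg x.a, sq_nonneg x.b, sq_nonneg x.c, sq_nonneg x.d]
  have hb : x.b ^ 2 = 0 := by nlinarith [sq_nonneg x.a, sq_nonneg x.b, sq_nonneg x.c, sq_nonneg x.d]
  have hc : x.c ^ 2 = 0 := by nlinarith [sq_nonneg x.a, sq_nonneg x.b, sq_nonneg x.c, sq_nonneg x.d]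
  have hd : x.d ^ 2 = 0 := by nlinarith [sq_nonneg x.a, sq_nonneg x.b, sq_nonneg x.c, sq_nonneg x.d]
  have ha' : x.a = 0 := by nlinarith [sq_nonneg x.a]
  have hb' : x.b = 0 := by nlinarith [sq_nonneg x.b]
  have hc' : x.c = 0 := by nlinarith [sq_nonneg x.c]
  have hd' : x.d = 0 := by nlinarith [sq_nonneg x.d]
  simp [φ, ha', hb', hc', hd']

lemma zmod2_sq : ∀ z : ZMod 2, z ^ 2 = z := by decide

lemma A_mod (x : Zw) : (A x : ZMod 2) =
    ((x.a:ZMod 2) + x.b) + ((x.c:ZMod 2) + x.d) := by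
  simp only [A]
  push_cast
  rw [zmod2_sq, zmod2_sq, zmod2_sq, zmod2_sq]
  ring

lemma B_mod (x : Zw) : (B x : ZMod 2) =
    ((x.a:ZMod 2) + x.c) * ((x.b:ZMod 2) + x.d) := by
  simp only [B]
  push_cast
  linear_combination (-(x.a : ZMod 2) * (x.d : ZMod 2)) * (zmod2_add_self 1)

lemma A_mod_V0 (x : Zw) : (A x : ZMod 2) = if V0 (pr x) then 1 else 0 := by
  rw [A_mod]
  by_cases h : V0 (pr x)
  · rw [if_pos h]
    have := h; simp only [V0, pr] at this
    linear_combination this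
  · rw [if_neg h]
    have h2 : ((x.a:ZMod 2) + x.b) + ((x.c:ZMod 2) + x.d) ≠ 1 := by
      intro e; exact h (by simp only [V0, pr]; linear_combination e)
    have : ∀ z : ZMod 2, z ≠ 1 → z = 0 := by decide
    exact this _ h2

lemma B_mod_V1 (x : Zw) : (B x : ZMod 2) = if V1 (pr x) then 1 else 0 := by
  rw [B_mod]
  by_cases h : V1 (pr x)
  · rw [if_pos h]
    have := h; simp only [V1, pr] at this
    rw [this.1, this.2]; ring
  · rw [if_neg h]
    rcases Dtri (pr x) with hs | h0 | h1
    · have := hs; simp only [S2, pr] at this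
      rw [this.1, this.2]; ring
    · have := h0; simp only [V0, pr] at this
      have key : ∀ p q r s : ZMod 2, p + q + r + s = 1 → (p + r) * (q + s) = 0 := by decide
      exact key _ _ _ _ this
    · exact absurd h1 h

end Zw

-- ## matrix action lemmas

section MatrixAction

variable {n : ℕ}

lemma sum_two {j l : Fin n} (hjl : j ≠ l) (Aj Al : ℂ) :
    ∑ q : Fin n, (if q = j then Aj else if q = l then Al else 0) = Aj + Al := by
  have : ∀ q : Fin n, (if q = j then Aj else if q = l then Al else 0)
      = (if q = j then Aj else 0) + (if q = l then Al else 0) := by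
    intro q
    by_cases h1 : q = j
    · subst h1; rw [if_pos rfl, if_pos rfl, if_neg hjl, add_zero]
    · rw [if_neg h1, if_neg h1, zero_add]
  rw [Finset.sum_congr rfl (fun q _ => this q), Finset.sum_add_distrib,
    Finset.sum_ite_eq' Finset.univ j (fun _ => Aj), Finset.sum_ite_eq' Finset.univ l (fun _ => Al)]
  simp

lemma twoLevel_mulVec (U : Matrix (Fin 2) (Fin 2) ℂ) {j l : Fin n} (hjl : j ≠ l)
    (u : Fin n → ℂ) :
    (twoLevel U j l).mulVec u = fun p =>
      if p = j then U 0 0 * u j + U 0 1 * u l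
      else if p = l then U 1 0 * u j + U 1 1 * u l
      else u p := by
  funext p
  simp only [Matrix.mulVec, dotProduct, twoLevel, Matrix.of_apply]
  rcases eq_or_ne p j with hpj | hpj
  · subst hpj
    rw [if_pos rfl]
    have key : ∀ q : Fin n,
        (if p = p ∧ q = p then U 0 0
          else if p = p ∧ q = l then U 0 1
          else if p = l ∧ q = p then U 1 0
          else if p = l ∧ q = l then U 1 1
          else if p = q then 1 else 0) * u q
        = (if q = p then U 0 0 * u p else if q = l then U 0 1 * u l else 0) := by
      intro q
      rcases eq_or_ne q p with h1 | h1
      · subst h1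
        rw [if_pos ⟨rfl, rfl⟩, if_pos rfl]
      · rcases eq_or_ne q l with h2 | h2
        · subst h2
          rw [if_neg (fun h => h1 h.2), if_pos ⟨rfl, rfl⟩, if_neg h1, if_pos rfl]
        · rw [if_neg (fun h => h1 h.2), if_neg (fun h => h2 h.2),
            if_neg (fun h => h1 h.2), if_neg (fun h => h2 h.2),
            if_neg (fun h : p = q => h1 h.symm), zero_mul, if_neg h1, if_neg h2]
    rw [Finset.sum_congr rfl (fun q _ => key q), sum_two hjl]
  · rw [if_neg hpj]
    rcases eq_or_ne p l with hpl | hpl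
    · subst hpl
      rw [if_pos rfl]
      have key : ∀ q : Fin n,
          (if p = j ∧ q = j then U 0 0
            else if p = j ∧ q = p then U 0 1
            else if p = p ∧ q = j then U 1 0
            else if p = p ∧ q = p then U 1 1
            else if p = q then 1 else 0) * u q
          = (if q = j then U 1 0 * u j else if q = p then U 1 1 * u p else 0) := by
        intro q
        rcases eq_or_ne q j with h1 | h1
        · subst h1
          rw [if_neg (fun h => hpj h.1), if_neg (fun h => hpj h.1),
            if_pos ⟨rfl, rfl⟩, if_pos rfl]
        · rcases eq_or_ne q p with h2 | h2
          · subst h2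
            rw [if_neg (fun h => hpj h.1), if_neg (fun h => hpj h.1),
              if_neg (fun h => h1 h.2), if_pos ⟨rfl, rfl⟩, if_neg h1, if_pos rfl]
          · rw [if_neg (fun h => hpj h.1), if_neg (fun h => hpj h.1),
              if_neg (fun h => h1 h.2), if_neg (fun h => h2 h.2),
              if_neg (fun h : p = q => h2 h.symm), zero_mul, if_neg h1, if_neg h2]
      rw [Finset.sum_congr rfl (fun q _ => key q), sum_two hjl]
    · rw [if_neg hpl]
      have key : ∀ q : Fin n,
          (if p = j ∧ q = j then U 0 0
            else if p = j ∧ q = l then U 0 1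
            else if p = l ∧ q = j then U 1 0
            else if p = l ∧ q = l then U 1 1
            else if p = q then 1 else 0) * u q
          = (if q = p then u p else 0) := by
        intro q
        rcases eq_or_ne q p with h1 | h1
        · subst h1
          rw [if_neg (fun h => hpj h.1), if_neg (fun h => hpj h.1),
            if_neg (fun h => hpl h.1), if_neg (fun h => hpl h.1),
            if_pos rfl, one_mul, if_pos rfl]
        · rw [if_neg (fun h => hpj h.1), if_neg (fun h => hpj h.1),
            if_neg (fun h => hpl h.1), if_neg (fun h => hpl h.1),
            if_neg (fun h : p = q => h1 h.symm), zero_mul, if_neg h1]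
      rw [Finset.sum_congr rfl (fun q _ => key q),
        Finset.sum_ite_eq' Finset.univ p (fun _ => u p)]
      simp

lemma oneLevel_mulVec (a : ℂ) (j : Fin n) (u : Fin n → ℂ) :
    (oneLevel a j).mulVec u = fun p => if p = j then a * u j else u p := by
  funext p
  simp only [Matrix.mulVec, dotProduct, oneLevel, Matrix.of_apply]
  have key : ∀ q : Fin n,
      (if p = q then (if p = j then a else 1) else 0) * u q
      = (if q = p then (if p = j then a else 1) * u p else 0) := by
    intro q
    rcases eq_or_ne q p with h1 | h1
    · subst h1; rw [if_pos rfl, if_pos rfl]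
    · rw [if_neg (fun h : p = q => h1 h.symm), zero_mul, if_neg h1]
  rw [Finset.sum_congr rfl (fun q _ => key q), Finset.sum_ite_eq' Finset.univ p _]
  simp only [Finset.mem_univ, if_pos]
  rcases eq_or_ne p j with hpj | hpj
  · subst hpj; rw [if_pos rfl, if_pos rfl]
  · rw [if_neg hpj, if_neg hpj, one_mul]

-- gate entries
lemma H00 : Hmat 0 0 = ((Real.sqrt 2 : ℝ) : ℂ)⁻¹ := by simp [Hmat]
lemma H01 : Hmat 0 1 = ((Real.sqrt 2 : ℝ) : ℂ)⁻¹ := by simp [Hmat]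
lemma H10 : Hmat 1 0 = ((Real.sqrt 2 : ℝ) : ℂ)⁻¹ := by simp [Hmat]
lemma H11 : Hmat 1 1 = -((Real.sqrt 2 : ℝ) : ℂ)⁻¹ := by simp [Hmat]
lemma T00 : Tmat 0 0 = 1 := rfl
lemma T01 : Tmat 0 1 = 0 := rfl
lemma T10 : Tmat 1 0 = 0 := rfl
lemma T11 : Tmat 1 1 = ω := rfl
lemma X00 : Xmat 0 0 = 0 := rfl
lemma X01 : Xmat 0 1 = 1 := rfl
lemma X10 : Xmat 1 0 = 1 := rfl
lemma X11 : Xmat 1 1 = 0 := rfl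

lemma T_action {j l : Fin n} (hjl : j ≠ l) (u : Fin n → ℂ) :
    (twoLevel Tmat j l).mulVec u = fun p => if p = l then ω * u l else u p := by
  rw [twoLevel_mulVec Tmat hjl]
  funext p
  by_cases h1 : p = j
  · subst h1; rw [if_pos rfl, if_neg hjl, T00, T01]; ring
  · rw [if_neg h1]
    by_cases h2 : p = l
    · subst h2; rw [if_pos rfl, if_pos rfl, T10, T11]; ring
    · rw [if_neg h2, if_neg h2]

lemma H_action {j l : Fin n} (hjl : j ≠ l) (u : Fin n → ℂ) :
    (twoLevel Hmat j l).mulVec u = fun p =>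
      if p = j then ((Real.sqrt 2 : ℝ) : ℂ)⁻¹ * (u j + u l)
      else if p = l then ((Real.sqrt 2 : ℝ) : ℂ)⁻¹ * (u j - u l)
      else u p := by
  rw [twoLevel_mulVec Hmat hjl]
  funext p
  by_cases h1 : p = j
  · subst h1; rw [if_pos rfl, if_pos rfl, H00, H01]; ring
  · rw [if_neg h1, if_neg h1]
    by_cases h2 : p = l
    · subst h2; rw [if_pos rfl, if_pos rfl, H10, H11]; ring
    · rw [if_neg h2, if_neg h2]

lemma X_action {j l : Fin n} (hjl : j ≠ l) (u : Fin n → ℂ) :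
    (twoLevel Xmat j l).mulVec u = fun p =>
      if p = j then u l else if p = l then u j else u p := by
  rw [twoLevel_mulVec Xmat hjl]
  funext p
  by_cases h1 : p = j
  · subst h1; rw [if_pos rfl, if_pos rfl, X00, X01]; ring
  · rw [if_neg h1, if_neg h1]
    by_cases h2 : p = l
    · subst h2; rw [if_pos rfl, if_pos rfl, X10, X11]; ring
    · rw [if_neg h2, if_neg h2]

lemma omega_action (j : Fin n) (u : Fin n → ℂ) :
    (oneLevel ω j).mulVec u = fun p => if p = j then ω * u j else u p :=
  oneLevel_mulVec ω j u

lemma prod_append_mulVec (L1 L2 : List (Matrix (Fin n) (Fin n) ℂ)) (u : Fin n → ℂ) :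
    ((L1 ++ L2).prod).mulVec u = L1.prod.mulVec (L2.prod.mulVec u) := by
  rw [List.prod_append, ← Matrix.mulVec_mulVec]

lemma cons_mulVec (M : Matrix (Fin n) (Fin n) ℂ) (L : List (Matrix (Fin n) (Fin n) ℂ))
    (u : Fin n → ℂ) :
    ((M :: L).prod).mulVec u = M.mulVec (L.prod.mulVec u) := by
  rw [List.prod_cons, ← Matrix.mulVec_mulVec]

lemma replicate_T_action {j l : Fin n} (hjl : j ≠ l) (m : ℕ) (u : Fin n → ℂ) :
    ((List.replicate m (twoLevel Tmat j l)).prod).mulVec u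
      = fun p => if p = l then ω ^ m * u l else u p := by
  induction m generalizing u with
  | zero => funext p; by_cases h : p = l <;> simp [h]
  | succ m ih =>
    rw [List.replicate_succ, cons_mulVec, ih, T_action hjl]
    funext p
    by_cases h : p = l
    · subst h; rw [if_pos rfl, if_pos rfl, if_pos rfl]; ring
    · rw [if_neg h, if_neg h, if_neg h]

lemma replicate_omega_action (j : Fin n) (m : ℕ) (u : Fin n → ℂ) :
    ((List.replicate m (oneLevel ω j)).prod).mulVec u
      = fun p => if p = j then ω ^ m * u j else u p := by
  induction m generalizing u with
  | zero => funext p; by_cases h : p = j <;> simp [h]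
  | succ m ih =>
    rw [List.replicate_succ, cons_mulVec, ih, omega_action]
    funext p
    by_cases h : p = j
    · subst h; rw [if_pos rfl, if_pos rfl, if_pos rfl]; ring
    · rw [if_neg h, if_neg h, if_neg h]

end MatrixAction

-- ## iterates of mw

namespace Zw

lemma φ_mw_iter (m : ℕ) (x : Zw) : φ (mw^[m] x) = ω ^ m * φ x := by
  induction m with
  | zero => simp
  | succ m ih => rw [Function.iterate_succ_apply', φ_mw, ih]; ring

lemma A_mw_iter (m : ℕ) (x : Zw) : A (mw^[m] x) = A x := by
  induction m with
  | zero => simp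
  | succ m ih => rw [Function.iterate_succ_apply', A_mw, ih]

lemma B_mw_iter (m : ℕ) (x : Zw) : B (mw^[m] x) = B x := by
  induction m with
  | zero => simp
  | succ m ih => rw [Function.iterate_succ_apply', B_mw, ih]

lemma q2_add_self (r : Q2) : r + r = 0 := by
  revert r; decide

lemma q2_zero : (0 : Q2) = ((0:ZMod 2),(0:ZMod 2),(0:ZMod 2),(0:ZMod 2)) := rfl

lemma sdvd_sub_of_add {x z : Zw} (h : sdvd (add x z)) : sdvd (sub x z) := by
  unfold sdvd at *
  rw [pr_sub] at *
  rwa [pr_add] at h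

end Zw

open Zw

/-- the dyadic vector associated to an integer vector and a denominator exponent -/
def uvec {n : ℕ} (w : Fin n → Zw) (k : ℕ) : Fin n → ℂ :=
  fun p => φ (w p) / ((Real.sqrt 2 : ℝ) : ℂ) ^ k

lemma HT_step {n : ℕ} {j l : Fin n} (hjl : j ≠ l) (k : ℕ) (w : Fin n → Zw) (m : ℕ)
    (hs : sdvd (add (w j) (mw^[m] (w l)))) :
    ∃ L : List (Matrix (Fin n) (Fin n) ℂ),
      (∀ M ∈ L, IsLevelGen M) ∧
      L.prod.mulVec (uvec w (k+1)) =
        uvec (Function.update (Function.update w j (hdiv (add (w j) (mw^[m] (w l))))) l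
          (hdiv (sub (w j) (mw^[m] (w l))))) (k+1) := by
  classical
  set z := mw^[m] (w l) with hz
  set x' := hdiv (add (w j) z) with hx'
  set y' := hdiv (sub (w j) z) with hy'
  refine ⟨twoLevel Hmat j l :: List.replicate m (twoLevel Tmat j l), ?_, ?_⟩
  · intro M hM
    rcases List.mem_cons.mp hM with h | h
    · exact Or.inl ⟨j, l, hjl, Or.inr (Or.inl h)⟩
    · rw [List.eq_of_mem_replicate h]
      exact Or.inl ⟨j, l, hjl, Or.inr (Or.inr rfl)⟩
  · rw [cons_mulVec, replicate_T_action hjl, H_action hjl]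
    funext p
    have hsub : sdvd (sub (w j) z) := sdvd_sub_of_add hs
    have hσx : φ (add (w j) z) = ((Real.sqrt 2:ℝ):ℂ) * φ x' := by
      rw [hx', ← φ_sig, sig_hdiv hs]
    have hσy : φ (sub (w j) z) = ((Real.sqrt 2:ℝ):ℂ) * φ y' := by
      rw [hy', ← φ_sig, sig_hdiv hsub]
    rcases eq_or_ne p j with hpj | hpj
    · subst hpj
      rw [if_pos rfl]
      have h1 : (if p = l then ω ^ m * uvec w (k+1) l else uvec w (k+1) p) = uvec w (k+1) p := by
        rw [if_neg hjl]
      rw [h1, if_pos rfl]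
      have h2 : uvec (Function.update (Function.update w p x') l y') (k+1) p = φ x' / ((Real.sqrt 2:ℝ):ℂ)^(k+1) := by
        unfold uvec
        rw [Function.update_of_ne hjl, Function.update_self]
      rw [h2]
      unfold uvec
      have hωm : φ z = ω ^ m * φ (w l) := by rw [hz, φ_mw_iter]
      have key : φ (w p) + ω ^ m * φ (w l) = ((Real.sqrt 2:ℝ):ℂ) * φ x' := by
        rw [← hωm, ← φ_add, hσx]
      field_simp
      linear_combination key
    · rw [if_neg hpj]
      rcases eq_or_ne p l with hpl | hpl
      · subst hpl
        rw [if_pos rfl, if_pos rfl, if_neg hjl]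
        have h2 : uvec (Function.update (Function.update w j x') p y') (k+1) p = φ y' / ((Real.sqrt 2:ℝ):ℂ)^(k+1) := by
          unfold uvec
          rw [Function.update_self]
        rw [h2]
        unfold uvec
        have hωm : φ z = ω ^ m * φ (w p) := by rw [hz, φ_mw_iter]
        have key : φ (w j) - ω ^ m * φ (w p) = ((Real.sqrt 2:ℝ):ℂ) * φ y' := by
          rw [← hωm, ← φ_sub, hσy]
        field_simp
        linear_combination key
      · rw [if_neg hpl, if_neg hpl]
        unfold uvec
        rw [Function.update_of_ne hpl, Function.update_of_ne hpj]

lemma step_core {n : ℕ} {j l : Fin n} (hjl : j ≠ l) (k : ℕ) (w : Fin n → Zw) (m : ℕ)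
    (hadd : sdvd (add (w j) (mw^[m] (w l)))) :
    ∃ (L : List (Matrix (Fin n) (Fin n) ℂ)) (w₂ : Fin n → Zw),
      (∀ M ∈ L, IsLevelGen M) ∧
      L.prod.mulVec (uvec w (k+1)) = uvec w₂ (k+1) ∧
      (∀ p, p ≠ j → p ≠ l → w₂ p = w p) ∧
      w₂ j = hdiv (add (w j) (mw^[m] (w l))) ∧
      w₂ l = hdiv (sub (w j) (mw^[m] (w l))) ∧
      A (w₂ j) + A (w₂ l) = A (w j) + A (w l) ∧
      B (w₂ j) + B (w₂ l) = B (w j) + B (w l) := by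
  classical
  obtain ⟨L, hval, hact⟩ := HT_step hjl k w m hadd
  set z := mw^[m] (w l) with hz
  set x' := hdiv (add (w j) z) with hx'
  set y' := hdiv (sub (w j) z) with hy'
  set w₂ := Function.update (Function.update w j x') l y' with hw₂
  have hj : w₂ j = x' := by
    rw [hw₂, Function.update_of_ne hjl, Function.update_self]
  have hl : w₂ l = y' := by
    rw [hw₂, Function.update_self]
  have hsub : sdvd (sub (w j) z) := sdvd_sub_of_add hadd
  have eσ1 : sig x' = add (w j) z := sig_hdiv hadd
  have eσ2 : sig y' = sub (w j) z := sig_hdiv hsub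
  have hA : A x' + A y' = A (w j) + A (w l) := by
    have p1 : A (add (w j) z) = 2 * A x' := by rw [← eσ1, A_sig]
    have p2 : A (sub (w j) z) = 2 * A y' := by rw [← eσ2, A_sig]
    have p3 := A_para (w j) z
    have p4 : A z = A (w l) := by rw [hz, A_mw_iter]
    omega
  have hB : B x' + B y' = B (w j) + B (w l) := by
    have p1 : B (add (w j) z) = 2 * B x' := by rw [← eσ1, B_sig]
    have p2 : B (sub (w j) z) = 2 * B y' := by rw [← eσ2, B_sig]
    have p3 := B_para (w j) z
    have p4 : B z = B (w l) := by rw [hz, B_mw_iter]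
    omega
  refine ⟨L, w₂, hval, hact, ?_, hj, hl, by rw [hj, hl]; exact hA, by rw [hj, hl]; exact hB⟩
  intro p hp1 hp2
  rw [hw₂, Function.update_of_ne hp2, Function.update_of_ne hp1]

lemma step_eq {n : ℕ} {j l : Fin n} (hjl : j ≠ l) (k : ℕ) (w : Fin n → Zw) (m : ℕ)
    (h : pr (w j) = pr (mw^[m] (w l))) :
    ∃ (L : List (Matrix (Fin n) (Fin n) ℂ)) (w₂ : Fin n → Zw),
      (∀ M ∈ L, IsLevelGen M) ∧
      L.prod.mulVec (uvec w (k+1)) = uvec w₂ (k+1) ∧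
      (∀ p, p ≠ j → p ≠ l → w₂ p = w p) ∧
      sdvd (w₂ j) ∧ sdvd (w₂ l) ∧
      A (w₂ j) + A (w₂ l) = A (w j) + A (w l) ∧
      B (w₂ j) + B (w₂ l) = B (w j) + B (w l) := by
  have hpr0 : pr (add (w j) (mw^[m] (w l))) =
      ((0:ZMod 2),(0:ZMod 2),(0:ZMod 2),(0:ZMod 2)) := by
    rw [pr_add, h, ← q2_zero, q2_add_self]
  have hpr0' : pr (sub (w j) (mw^[m] (w l))) =
      ((0:ZMod 2),(0:ZMod 2),(0:ZMod 2),(0:ZMod 2)) := by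
    rw [pr_sub, h, ← q2_zero, q2_add_self]
  have hadd : sdvd (add (w j) (mw^[m] (w l))) := sdvd_of_pr_zero hpr0
  obtain ⟨L, w₂, hval, hact, hoff, hj, hl, hA, hB⟩ := step_core hjl k w m hadd
  refine ⟨L, w₂, hval, hact, hoff, ?_, ?_, hA, hB⟩
  · rw [hj]; exact sdvd_hdiv_of_pr_zero hpr0
  · rw [hl]; exact sdvd_hdiv_of_pr_zero hpr0'

lemma step_ones {n : ℕ} {j l : Fin n} (hjl : j ≠ l) (k : ℕ) (w : Fin n → Zw) (m : ℕ)
    (h : pr (w j) + pr (mw^[m] (w l)) = ((1:ZMod 2),(1:ZMod 2),(1:ZMod 2),(1:ZMod 2))) :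
    ∃ (L : List (Matrix (Fin n) (Fin n) ℂ)) (w₂ : Fin n → Zw),
      (∀ M ∈ L, IsLevelGen M) ∧
      L.prod.mulVec (uvec w (k+1)) = uvec w₂ (k+1) ∧
      (∀ p, p ≠ j → p ≠ l → w₂ p = w p) ∧
      V1 (pr (w₂ j)) ∧ V1 (pr (w₂ l)) ∧
      A (w₂ j) + A (w₂ l) = A (w j) + A (w l) ∧
      B (w₂ j) + B (w₂ l) = B (w j) + B (w l) := by
  have hpr1 : pr (add (w j) (mw^[m] (w l))) =
      ((1:ZMod 2),(1:ZMod 2),(1:ZMod 2),(1:ZMod 2)) := by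
    rw [pr_add, h]
  have hpr1' : pr (sub (w j) (mw^[m] (w l))) =
      ((1:ZMod 2),(1:ZMod 2),(1:ZMod 2),(1:ZMod 2)) := by
    rw [pr_sub, h]
  have hadd : sdvd (add (w j) (mw^[m] (w l))) := sdvd_of_pr_ones hpr1
  obtain ⟨L, w₂, hval, hact, hoff, hj, hl, hA, hB⟩ := step_core hjl k w m hadd
  refine ⟨L, w₂, hval, hact, hoff, ?_, ?_, hA, hB⟩
  · rw [hj]; exact v1_hdiv_of_pr_ones hpr1
  · rw [hl]; exact v1_hdiv_of_pr_ones hpr1'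

lemma pr_mw_two (x : Zw) : pr (mw^[2] x) = shft (shft (pr x)) := by
  show pr (mw (mw x)) = _
  rw [pr_mw, pr_mw]

lemma pr_mw_three (x : Zw) : pr (mw^[3] x) = shft (shft (shft (pr x))) := by
  show pr (mw (mw (mw x))) = _
  rw [pr_mw, pr_mw, pr_mw]

lemma pr_mw_one (x : Zw) : pr (mw^[1] x) = shft (pr x) := by
  show pr (mw x) = _
  rw [pr_mw]

lemma pr_mw_zero (x : Zw) : pr (mw^[0] x) = pr x := rfl

lemma pair_step_v1 {n : ℕ} {j l : Fin n} (hjl : j ≠ l) (k : ℕ) (w : Fin n → Zw)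
    (h1 : V1 (pr (w j))) (h2 : V1 (pr (w l))) :
    ∃ (L : List (Matrix (Fin n) (Fin n) ℂ)) (w₂ : Fin n → Zw),
      (∀ M ∈ L, IsLevelGen M) ∧
      L.prod.mulVec (uvec w (k+1)) = uvec w₂ (k+1) ∧
      (∀ p, p ≠ j → p ≠ l → w₂ p = w p) ∧
      sdvd (w₂ j) ∧ sdvd (w₂ l) ∧
      A (w₂ j) + A (w₂ l) = A (w j) + A (w l) ∧
      B (w₂ j) + B (w₂ l) = B (w j) + B (w l) := by
  rcases D1 (pr (w j)) (pr (w l)) h1 h2 with h | h | h | h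
  · exact step_eq hjl k w 0 (by rw [pr_mw_zero]; exact h)
  · exact step_eq hjl k w 1 (by rw [pr_mw_one]; exact h)
  · exact step_eq hjl k w 2 (by rw [pr_mw_two]; exact h)
  · exact step_eq hjl k w 3 (by rw [pr_mw_three]; exact h)

lemma cross_finish {n : ℕ} {j l : Fin n} (hjl : j ≠ l) (k : ℕ) (w : Fin n → Zw) (m : ℕ)
    (h : pr (w j) + pr (mw^[m] (w l)) = ((1:ZMod 2),(1:ZMod 2),(1:ZMod 2),(1:ZMod 2))) :
    ∃ (L : List (Matrix (Fin n) (Fin n) ℂ)) (w₂ : Fin n → Zw),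
      (∀ M ∈ L, IsLevelGen M) ∧
      L.prod.mulVec (uvec w (k+1)) = uvec w₂ (k+1) ∧
      (∀ p, p ≠ j → p ≠ l → w₂ p = w p) ∧
      sdvd (w₂ j) ∧ sdvd (w₂ l) ∧
      A (w₂ j) + A (w₂ l) = A (w j) + A (w l) ∧
      B (w₂ j) + B (w₂ l) = B (w j) + B (w l) := by
  obtain ⟨L1, w₂, hval1, hact1, hoff1, hv1j, hv1l, hA1, hB1⟩ := step_ones hjl k w m h
  obtain ⟨L2, w₃, hval2, hact2, hoff2, hsj, hsl, hA2, hB2⟩ := pair_step_v1 hjl k w₂ hv1j hv1l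
  refine ⟨L2 ++ L1, w₃, ?_, ?_, ?_, hsj, hsl, by omega, by omega⟩
  · intro M hM
    rcases List.mem_append.mp hM with hM | hM
    · exact hval2 M hM
    · exact hval1 M hM
  · rw [prod_append_mulVec, hact1, hact2]
  · intro p hp1 hp2
    rw [hoff2 p hp1 hp2, hoff1 p hp1 hp2]

lemma pair_step {n : ℕ} {j l : Fin n} (hjl : j ≠ l) (k : ℕ) (w : Fin n → Zw)
    (hsame : (V0 (pr (w j)) ∧ V0 (pr (w l))) ∨ (V1 (pr (w j)) ∧ V1 (pr (w l)))) :
    ∃ (L : List (Matrix (Fin n) (Fin n) ℂ)) (w₂ : Fin n → Zw),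
      (∀ M ∈ L, IsLevelGen M) ∧
      L.prod.mulVec (uvec w (k+1)) = uvec w₂ (k+1) ∧
      (∀ p, p ≠ j → p ≠ l → w₂ p = w p) ∧
      sdvd (w₂ j) ∧ sdvd (w₂ l) ∧
      A (w₂ j) + A (w₂ l) = A (w j) + A (w l) ∧
      B (w₂ j) + B (w₂ l) = B (w j) + B (w l) := by
  rcases hsame with ⟨h1, h2⟩ | ⟨h1, h2⟩
  · rcases D2 (pr (w j)) (pr (w l)) h1 h2 with (h | h | h | h) | (h | h | h | h)
    · exact step_eq hjl k w 0 (by rw [pr_mw_zero]; exact h)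
    · exact step_eq hjl k w 1 (by rw [pr_mw_one]; exact h)
    · exact step_eq hjl k w 2 (by rw [pr_mw_two]; exact h)
    · exact step_eq hjl k w 3 (by rw [pr_mw_three]; exact h)
    · exact cross_finish hjl k w 0 (by rw [pr_mw_zero]; exact h)
    · exact cross_finish hjl k w 1 (by rw [pr_mw_one]; exact h)
    · exact cross_finish hjl k w 2 (by rw [pr_mw_two]; exact h)
    · exact cross_finish hjl k w 3 (by rw [pr_mw_three]; exact h)
  · exact pair_step_v1 hjl k w h1 h2

-- ## base case k = 0

lemma int_sq_cases {a : ℤ} (h : a^2 = 1) : a = 1 ∨ a = -1 := by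
  have h1 : (a - 1) * (a + 1) = 0 := by ring_nf; linarith
  rcases mul_eq_zero.mp h1 with h2 | h2
  · left; linarith
  · right; linarith

lemma unit_phi {x : Zw} (h : A x = 1) : ∃ m : ℕ, m < 8 ∧ ω ^ m * φ x = 1 := by
  simp only [A] at h
  obtain ⟨sa, hsa⟩ : ∃ s, x.a^2 = s := ⟨_, rfl⟩
  obtain ⟨sb, hsb⟩ : ∃ s, x.b^2 = s := ⟨_, rfl⟩
  obtain ⟨sc, hsc⟩ : ∃ s, x.c^2 = s := ⟨_, rfl⟩
  obtain ⟨sd, hsd⟩ : ∃ s, x.d^2 = s := ⟨_, rfl⟩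
  have ha0 := sq_nonneg x.a
  have hb0 := sq_nonneg x.b
  have hc0 := sq_nonneg x.c
  have hd0 := sq_nonneg x.d
  rw [hsa, hsb, hsc, hsd] at h
  rw [hsa] at ha0
  rw [hsb] at hb0
  rw [hsc] at hc0
  rw [hsd] at hd0
  have hcases : (sa = 1 ∧ sb = 0 ∧ sc = 0 ∧ sd = 0) ∨ (sb = 1 ∧ sa = 0 ∧ sc = 0 ∧ sd = 0)
      ∨ (sc = 1 ∧ sa = 0 ∧ sb = 0 ∧ sd = 0) ∨ (sd = 1 ∧ sa = 0 ∧ sb = 0 ∧ sc = 0) := by omega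
  have hz : ∀ y : ℤ, y^2 = 0 → y = 0 := fun y hy => by
    have := sq_nonneg y; nlinarith
  rcases hcases with ⟨h1, h2, h3, h4⟩ | ⟨h1, h2, h3, h4⟩ | ⟨h1, h2, h3, h4⟩ | ⟨h1, h2, h3, h4⟩
  · -- a = ±1
    have hb := hz _ (hsb.trans h2); have hc := hz _ (hsc.trans h3); have hd := hz _ (hsd.trans h4)
    rcases int_sq_cases (hsa.trans h1) with ha | ha
    · exact ⟨5, by norm_num, by simp [φ, ha, hb, hc, hd]; linear_combination omega_pow8⟩
    · exact ⟨1, by norm_num, by simp [φ, ha, hb, hc, hd]; linear_combination -omega_pow4⟩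
  · have ha := hz _ (hsa.trans h2); have hc := hz _ (hsc.trans h3); have hd := hz _ (hsd.trans h4)
    rcases int_sq_cases (hsb.trans h1) with hb | hb
    · exact ⟨6, by norm_num, by simp [φ, ha, hb, hc, hd]; linear_combination omega_pow8⟩
    · exact ⟨2, by norm_num, by simp [φ, ha, hb, hc, hd]; linear_combination -omega_pow4⟩
  · have ha := hz _ (hsa.trans h2); have hb := hz _ (hsb.trans h3); have hd := hz _ (hsd.trans h4)
    rcases int_sq_cases (hsc.trans h1) with hc | hc
    · exact ⟨7, by norm_num, by simp [φ, ha, hb, hc, hd]; linear_combination omega_pow8⟩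
    · exact ⟨3, by norm_num, by simp [φ, ha, hb, hc, hd]; linear_combination -omega_pow4⟩
  · have ha := hz _ (hsa.trans h2); have hb := hz _ (hsb.trans h3); have hc := hz _ (hsc.trans h4)
    rcases int_sq_cases (hsd.trans h1) with hd | hd
    · exact ⟨0, by norm_num, by simp [φ, ha, hb, hc, hd]⟩
    · exact ⟨4, by norm_num, by simp [φ, ha, hb, hc, hd]; linear_combination -omega_pow4⟩

lemma base_case {n : ℕ} (w : Fin n → Zw) (hA : ∑ j, A (w j) = 2^0) :
    ∃ L : List (Matrix (Fin n) (Fin n) ℂ),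
      (∀ M ∈ L, IsLevelGen M) ∧
      L.prod.mulVec (uvec w 0) = fun p : Fin n => if (p : ℕ) = 0 then (1 : ℂ) else 0 := by
  classical
  rw [pow_zero] at hA
  have hn : 0 < n := by
    by_contra hn
    push_neg at hn
    interval_cases n
    simp at hA
  -- find the unique nonzero entry
  have hex : ∃ j₀, A (w j₀) ≠ 0 := by
    by_contra hz
    push_neg at hz
    rw [Finset.sum_eq_zero (fun j _ => hz j)] at hA
    exact one_ne_zero hA.symm
  obtain ⟨j₀, hj₀⟩ := hex
  have hj₀pos : 1 ≤ A (w j₀) := lt_of_le_of_ne (A_nonneg _) (Ne.symm hj₀)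
  have hsplit : A (w j₀) + ∑ p ∈ Finset.univ.erase j₀, A (w p) = 1 := by
    rw [Finset.add_sum_erase Finset.univ (fun p => A (w p)) (Finset.mem_univ j₀)]
    exact hA
  have hrest_nonneg : 0 ≤ ∑ p ∈ Finset.univ.erase j₀, A (w p) :=
    Finset.sum_nonneg (fun p _ => A_nonneg _)
  have hj₀1 : A (w j₀) = 1 := by omega
  have hrest : ∀ p, p ≠ j₀ → A (w p) = 0 := by
    intro p hp
    have h0 : ∑ p ∈ Finset.univ.erase j₀, A (w p) = 0 := by omega
    have := (Finset.sum_eq_zero_iff_of_nonneg (fun p _ => A_nonneg (w p))).mp h0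
    exact this p (Finset.mem_erase.mpr ⟨hp, Finset.mem_univ p⟩)
  obtain ⟨m, hm8, hm⟩ := unit_phi hj₀1
  -- the vector after the ω gates
  have step1 : ((List.replicate m (oneLevel ω j₀)).prod).mulVec (uvec w 0)
      = fun p => if p = j₀ then 1 else 0 := by
    rw [replicate_omega_action]
    funext p
    rcases eq_or_ne p j₀ with hp | hp
    · subst hp
      rw [if_pos rfl, if_pos rfl]
      unfold uvec
      rw [pow_zero, div_one]
      exact hm
    · rw [if_neg hp, if_neg hp]
      unfold uvec
      rw [pow_zero, div_one]
      exact A_eq_zero (hrest p hp)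
  set z : Fin n := ⟨0, hn⟩ with hzdef
  rcases eq_or_ne j₀ z with hjz | hjz
  · refine ⟨List.replicate m (oneLevel ω j₀), ?_, ?_⟩
    · intro M hM
      rw [List.eq_of_mem_replicate hM]
      exact Or.inr ⟨j₀, rfl⟩
    · rw [step1]
      funext p
      rcases eq_or_ne p j₀ with hp | hp
      · subst hp
        rw [if_pos rfl, if_pos (show ((p:ℕ) = 0) by rw [hjz])]
      · rw [if_neg hp, if_neg ?_]
        intro hc
        apply hp
        rw [hjz]
        exact Fin.ext hc
  · refine ⟨twoLevel Xmat z j₀ :: List.replicate m (oneLevel ω j₀), ?_, ?_⟩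
    · intro M hM
      rcases List.mem_cons.mp hM with h | h
      · exact Or.inl ⟨z, j₀, Ne.symm hjz, Or.inl h⟩
      · rw [List.eq_of_mem_replicate h]
        exact Or.inr ⟨j₀, rfl⟩
    · rw [cons_mulVec, step1, X_action (Ne.symm hjz)]
      funext p
      rcases eq_or_ne p z with hp | hp
      · subst hp
        rw [if_pos rfl, if_pos rfl, if_pos rfl]
      · rw [if_neg hp]
        rcases eq_or_ne p j₀ with hp2 | hp2
        · subst hp2
          rw [if_pos rfl, if_neg (Ne.symm hjz), if_neg ?_]
          intro hc
          exact hp (Fin.ext hc)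
        · rw [if_neg hp2, if_neg hp2, if_neg ?_]
          intro hc
          exact hp (Fin.ext hc)

-- ## counting and reduction

lemma D_V0_odd : ∀ r : Q2, V0 r → ¬ S2 r := by decide
lemma D_V1_odd : ∀ r : Q2, V1 r → ¬ S2 r := by decide

lemma sum_pair {n : ℕ} {j l : Fin n} (hjl : j ≠ l) (f g : Fin n → ℤ)
    (hoff : ∀ p, p ≠ j → p ≠ l → g p = f p) (hsum : g j + g l = f j + f l) :
    ∑ p, g p = ∑ p, f p := by
  classical
  have hl' : l ∈ Finset.univ.erase j := Finset.mem_erase.mpr ⟨Ne.symm hjl, Finset.mem_univ l⟩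
  have e1 : ∀ h : Fin n → ℤ, ∑ p, h p
      = h j + (h l + ∑ p ∈ (Finset.univ.erase j).erase l, h p) := by
    intro h
    rw [Finset.add_sum_erase _ h hl', Finset.add_sum_erase Finset.univ h (Finset.mem_univ j)]
  rw [e1 f, e1 g]
  have e2 : ∑ p ∈ (Finset.univ.erase j).erase l, g p
      = ∑ p ∈ (Finset.univ.erase j).erase l, f p := by
    apply Finset.sum_congr rfl
    intro p hp
    have h1 := Finset.mem_erase.mp hp
    exact hoff p (Finset.mem_erase.mp h1.2).1 h1.1
  rw [e2]
  omega

lemma card_even_of_sum {n : ℕ} (w : Fin n → Zw) (k : ℕ)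
    (hA : ∑ j, A (w j) = 2^(k+1)) (hB : ∑ j, B (w j) = 0) :
    Even (Finset.univ.filter (fun j => V0 (pr (w j)))).card ∧
    Even (Finset.univ.filter (fun j => V1 (pr (w j)))).card := by
  classical
  constructor
  · have h1 : ((∑ j, A (w j) : ℤ) : ZMod 2)
        = ((Finset.univ.filter (fun j => V0 (pr (w j)))).card : ZMod 2) := by
      push_cast
      rw [← Finset.sum_boole]
      apply Finset.sum_congr rfl
      intro p _
      exact_mod_cast A_mod_V0 (w p)
    rw [hA] at h1
    have h2 : (((2:ℤ)^(k+1) : ℤ) : ZMod 2) = 0 := by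
      push_cast
      rw [pow_succ]
      simp [show (2 : ZMod 2) = 0 from rfl]
    rw [h2] at h1
    obtain ⟨r, hr⟩ := (ZMod.natCast_eq_zero_iff _ 2).mp h1.symm
    exact ⟨r, by omega⟩
  · have h1 : ((∑ j, B (w j) : ℤ) : ZMod 2)
        = ((Finset.univ.filter (fun j => V1 (pr (w j)))).card : ZMod 2) := by
      push_cast
      rw [← Finset.sum_boole]
      apply Finset.sum_congr rfl
      intro p _
      exact_mod_cast B_mod_V1 (w p)
    rw [hB] at h1
    simp only [Int.cast_zero] at h1
    obtain ⟨r, hr⟩ := (ZMod.natCast_eq_zero_iff _ 2).mp h1.symm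
    exact ⟨r, by omega⟩

instance : DecidablePred Zw.sdvd := fun x => inferInstanceAs (Decidable (S2 (pr x)))

lemma exists_pair {n : ℕ} (w : Fin n → Zw) (k : ℕ)
    (hA : ∑ j, A (w j) = 2^(k+1)) (hB : ∑ j, B (w j) = 0)
    {j : Fin n} (hodd : ¬ sdvd (w j)) :
    ∃ l : Fin n, j ≠ l ∧
      ((V0 (pr (w j)) ∧ V0 (pr (w l))) ∨ (V1 (pr (w j)) ∧ V1 (pr (w l)))) := by
  classical
  obtain ⟨hev0, hev1⟩ := card_even_of_sum w k hA hB
  rcases Dtri (pr (w j)) with hs | h0 | h1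
  · exact absurd hs hodd
  · set S := Finset.univ.filter (fun p => V0 (pr (w p))) with hS
    have hjS : j ∈ S := Finset.mem_filter.mpr ⟨Finset.mem_univ j, h0⟩
    have hcard : 1 < S.card := by
      obtain ⟨r, hr⟩ := hev0
      have h1le : 0 < S.card := Finset.card_pos.mpr ⟨j, hjS⟩
      omega
    obtain ⟨l, hlS, hlj⟩ := Finset.exists_mem_ne hcard j
    exact ⟨l, Ne.symm hlj, Or.inl ⟨h0, (Finset.mem_filter.mp hlS).2⟩⟩
  · set S := Finset.univ.filter (fun p => V1 (pr (w p))) with hS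
    have hjS : j ∈ S := Finset.mem_filter.mpr ⟨Finset.mem_univ j, h1⟩
    have hcard : 1 < S.card := by
      obtain ⟨r, hr⟩ := hev1
      have h1le : 0 < S.card := Finset.card_pos.mpr ⟨j, hjS⟩
      omega
    obtain ⟨l, hlS, hlj⟩ := Finset.exists_mem_ne hcard j
    exact ⟨l, Ne.symm hlj, Or.inr ⟨h1, (Finset.mem_filter.mp hlS).2⟩⟩

lemma reduce_all (k : ℕ) {n : ℕ} : ∀ (N : ℕ) (w : Fin n → Zw),
    (Finset.univ.filter (fun j => ¬ sdvd (w j))).card ≤ N →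
    (∑ j, A (w j) = 2^(k+1)) → (∑ j, B (w j) = 0) →
    ∃ (L : List (Matrix (Fin n) (Fin n) ℂ)) (w' : Fin n → Zw),
      (∀ M ∈ L, IsLevelGen M) ∧
      L.prod.mulVec (uvec w (k+1)) = uvec w' k ∧
      (∑ j, A (w' j) = 2^k) ∧ (∑ j, B (w' j) = 0) := by
  classical
  intro N
  induction N with
  | zero =>
    intro w hcard hA hB
    have hall : ∀ j, sdvd (w j) := by
      intro j
      by_contra hj
      have : j ∈ Finset.univ.filter (fun j => ¬ sdvd (w j)) :=
        Finset.mem_filter.mpr ⟨Finset.mem_univ j, hj⟩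
      have := Finset.card_pos.mpr ⟨j, this⟩
      omega
    refine ⟨[], fun p => hdiv (w p), by simp, ?_, ?_, ?_⟩
    · rw [List.prod_nil]
      funext p
      rw [Matrix.one_mulVec]
      unfold uvec
      have : φ (w p) = ((Real.sqrt 2:ℝ):ℂ) * φ (hdiv (w p)) := by
        rw [← φ_sig, sig_hdiv (hall p)]
      rw [this, pow_succ]
      field_simp
    · have : ∀ p, A (w p) = 2 * A (hdiv (w p)) := by
        intro p
        rw [← A_sig, sig_hdiv (hall p)]
      rw [Finset.sum_congr rfl (fun p _ => this p), ← Finset.mul_sum, pow_succ] at hA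
      simp only []
      linarith
    · have : ∀ p, B (w p) = 2 * B (hdiv (w p)) := by
        intro p
        rw [← B_sig, sig_hdiv (hall p)]
      rw [Finset.sum_congr rfl (fun p _ => this p), ← Finset.mul_sum] at hB
      simp only []
      linarith
  | succ N ih =>
    intro w hcard hA hB
    by_cases hex : ∃ j, ¬ sdvd (w j)
    · obtain ⟨j, hj⟩ := hex
      obtain ⟨l, hjl, hsame⟩ := exists_pair w k hA hB hj
      obtain ⟨L1, w₂, hval1, hact1, hoff1, hsj, hsl, hA1, hB1⟩ := pair_step hjl k w hsame
      have hA2 : ∑ p, A (w₂ p) = 2^(k+1) :=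
        (sum_pair hjl (fun p => A (w p)) (fun p => A (w₂ p))
          (fun p h1 h2 => congrArg Zw.A (hoff1 p h1 h2)) hA1).trans hA
      have hB2 : ∑ p, B (w₂ p) = 0 :=
        (sum_pair hjl (fun p => B (w p)) (fun p => B (w₂ p))
          (fun p h1 h2 => congrArg Zw.B (hoff1 p h1 h2)) hB1).trans hB
      have hjmem : j ∈ Finset.univ.filter (fun p => ¬ sdvd (w p)) :=
        Finset.mem_filter.mpr ⟨Finset.mem_univ j, hj⟩
      have hlmem : l ∈ (Finset.univ.filter (fun p => ¬ sdvd (w p))).erase j := by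
        refine Finset.mem_erase.mpr ⟨Ne.symm hjl, Finset.mem_filter.mpr ⟨Finset.mem_univ l, ?_⟩⟩
        rcases hsame with ⟨_, h⟩ | ⟨_, h⟩
        · exact D_V0_odd _ h
        · exact D_V1_odd _ h
      have hsubset : Finset.univ.filter (fun p => ¬ sdvd (w₂ p))
          ⊆ ((Finset.univ.filter (fun p => ¬ sdvd (w p))).erase j).erase l := by
        intro p hp
        have hp' := (Finset.mem_filter.mp hp).2
        have hpj : p ≠ j := fun h => hp' (h ▸ hsj)
        have hpl : p ≠ l := fun h => hp' (h ▸ hsl)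
        refine Finset.mem_erase.mpr ⟨hpl, Finset.mem_erase.mpr ⟨hpj, ?_⟩⟩
        refine Finset.mem_filter.mpr ⟨Finset.mem_univ p, ?_⟩
        rwa [hoff1 p hpj hpl] at hp'
      have hcard2 : (Finset.univ.filter (fun p => ¬ sdvd (w₂ p))).card ≤ N := by
        have h1 := Finset.card_le_card hsubset
        rw [Finset.card_erase_of_mem hlmem, Finset.card_erase_of_mem hjmem] at h1
        omega
      obtain ⟨L2, w', hval2, hact2, hA', hB'⟩ := ih w₂ hcard2 hA2 hB2
      refine ⟨L2 ++ L1, w', ?_, ?_, hA', hB'⟩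
      · intro M hM
        rcases List.mem_append.mp hM with hM | hM
        · exact hval2 M hM
        · exact hval1 M hM
      · rw [prod_append_mulVec, hact1, hact2]
    · push_neg at hex
      have : (Finset.univ.filter (fun j => ¬ sdvd (w j))).card ≤ 0 := by
        rw [Finset.filter_false_of_mem (fun j _ => not_not_intro (hex j)), Finset.card_empty]
      exact ih w (le_trans this (Nat.zero_le N)) hA hB

lemma main_induction (k : ℕ) {n : ℕ} (w : Fin n → Zw)
    (hA : ∑ j, A (w j) = 2^k) (hB : ∑ j, B (w j) = 0) :
    ∃ L : List (Matrix (Fin n) (Fin n) ℂ),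
      (∀ M ∈ L, IsLevelGen M) ∧
      L.prod.mulVec (uvec w k) = fun p : Fin n => if (p : ℕ) = 0 then (1 : ℂ) else 0 := by
  induction k generalizing w with
  | zero =>
    obtain ⟨L, hval, hact⟩ := base_case w hA
    exact ⟨L, hval, hact⟩
  | succ k ih =>
    obtain ⟨L1, w', hval1, hact1, hA', hB'⟩ :=
      reduce_all k ((Finset.univ.filter (fun j => ¬ sdvd (w j))).card) w le_rfl hA hB
    obtain ⟨L2, hval2, hact2⟩ := ih w' hA' hB'
    refine ⟨L2 ++ L1, ?_, ?_⟩
    · intro M hM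
      rcases List.mem_append.mp hM with hM | hM
      · exact hval2 M hM
      · exact hval1 M hM
    · rw [prod_append_mulVec, hact1, hact2]

-- ## preprocessing: representing dyadic vectors

lemma φ_sig_iter (r : ℕ) (x : Zw) : φ (sig^[r] x) = ((Real.sqrt 2:ℝ):ℂ)^r * φ x := by
  induction r with
  | zero => simp
  | succ r ih => rw [Function.iterate_succ_apply', φ_sig, ih, pow_succ]; ring

lemma lift_denom {x : Zw} {k1 k2 : ℕ} (h : k1 ≤ k2) :
    φ x / ((Real.sqrt 2:ℝ):ℂ)^k1 = φ (sig^[k2 - k1] x) / ((Real.sqrt 2:ℝ):ℂ)^k2 := by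
  rw [φ_sig_iter]
  have hpow : ((Real.sqrt 2:ℝ):ℂ)^(k2 - k1) * ((Real.sqrt 2:ℝ):ℂ)^k1
      = ((Real.sqrt 2:ℝ):ℂ)^k2 := by
    rw [← pow_add]
    congr 1
    omega
  rw [div_eq_div_iff (pow_ne_zero _ csqrt2_ne) (pow_ne_zero _ csqrt2_ne)]
  linear_combination (-(φ x)) * hpow

lemma inDω_rep {t : ℂ} (h : inDω t) :
    ∃ (k : ℕ) (x : Zw), t = φ x / ((Real.sqrt 2:ℝ):ℂ)^k := by
  obtain ⟨a, b, c, d, ⟨za, ma, ha⟩, ⟨zb, mb, hb⟩, ⟨zc, mc, hc⟩, ⟨zd, md', hd⟩, ht⟩ := h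
  set m := max (max ma mb) (max mc md') with hm
  have key : ∀ (q : ℚ) (z : ℤ) (mq : ℕ), q = z / 2^mq → mq ≤ m →
      (q : ℂ) * (2:ℂ)^m = ((z * 2^(m - mq) : ℤ) : ℂ) := by
    intro q z mq hq hle
    have h2 : (q * 2^m : ℚ) = ((z * 2^(m - mq) : ℤ) : ℚ) := by
      rw [hq]
      push_cast
      have hmm : m - mq + mq = m := by omega
      rw [div_mul_eq_mul_div, div_eq_iff (by positivity : ((2:ℚ)^mq) ≠ 0), mul_assoc, ← pow_add, hmm]
    calc (q:ℂ) * (2:ℂ)^m = ((q * 2^m : ℚ) : ℂ) := by push_cast; ring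
    _ = ((z * 2^(m - mq) : ℤ) : ℂ) := by rw [h2]; push_cast; ring
  have ca := key a za ma ha (le_trans (le_max_left _ _) (le_max_left _ _))
  have cb := key b zb mb hb (le_trans (le_max_right _ _) (le_max_left _ _))
  have cc := key c zc mc hc (le_trans (le_max_left _ _) (le_max_right _ _))
  have cd := key d zd md' hd (le_trans (le_max_right _ _) (le_max_right _ _))
  refine ⟨2 * m, ⟨za * 2^(m - ma), zb * 2^(m - mb), zc * 2^(m - mc), zd * 2^(m - md')⟩, ?_⟩
  have hpow : ((Real.sqrt 2:ℝ):ℂ)^(2*m) = (2:ℂ)^m := by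
    rw [pow_mul, csqrt2_sq]
  rw [hpow]
  rw [eq_div_iff (pow_ne_zero m (two_ne_zero : (2:ℂ) ≠ 0))]
  rw [ht]
  simp only [φ]
  linear_combination ω^3 * ca + ω^2 * cb + ω * cc + cd

lemma normSq_uvec {n : ℕ} (w : Fin n → Zw) (k : ℕ) (j : Fin n) :
    Complex.normSq (uvec w k j) = ((A (w j) : ℝ) + (B (w j) : ℝ) * Real.sqrt 2) / 2^k := by
  unfold uvec
  rw [Complex.normSq_div, ← normSq_φ]
  congr 1
  rw [← Complex.ofReal_pow, Complex.normSq_ofReal, ← mul_pow,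
    Real.mul_self_sqrt (by norm_num : (0:ℝ) ≤ 2)]


theorem stmt9_helper (n : ℕ) (u : Fin n → ℂ) (hu : ∀ j, inDω (u j))
    (hnorm : ∑ j, Complex.normSq (u j) = 1) :
    ∃ L : List (Matrix (Fin n) (Fin n) ℂ),
      (∀ M ∈ L, IsLevelGen M) ∧
      L.prod.mulVec u = fun p : Fin n => if (p : ℕ) = 0 then (1 : ℂ) else 0 := by
  classical
  have H : ∀ j, ∃ (k : ℕ) (x : Zw), u j = φ x / ((Real.sqrt 2:ℝ):ℂ)^k :=
    fun j => inDω_rep (hu j)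
  choose kf xf hf using H
  set k := Finset.univ.sup kf with hk
  set w : Fin n → Zw := fun j => sig^[k - kf j] (xf j) with hw
  have hu_eq : u = uvec w k := by
    funext j
    rw [hf j, lift_denom (Finset.le_sup (Finset.mem_univ j))]
    rfl
  -- norm equation
  have hreal : ((∑ j, A (w j) : ℤ) : ℝ) + ((∑ j, B (w j) : ℤ) : ℝ) * Real.sqrt 2
      = 2^k := by
    have h1 : ∑ j, Complex.normSq (uvec w k j) = 1 := by
      rw [← hu_eq]; exact hnorm
    have h2 : ∑ j, ((A (w j) : ℝ) + (B (w j) : ℝ) * Real.sqrt 2) / 2^k = 1 := by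
      rw [← Finset.sum_congr rfl (fun j _ => normSq_uvec w k j)]
      exact h1
    rw [← Finset.sum_div] at h2
    rw [div_eq_one_iff_eq (by positivity : ((2:ℝ)^k) ≠ 0)] at h2
    rw [← h2]
    rw [Finset.sum_add_distrib, ← Finset.sum_mul]
    push_cast
    ring
  have hBzero : (∑ j, B (w j) : ℤ) = 0 := by
    by_contra hB
    apply irrational_sqrt_two
    refine ⟨((2^k - (∑ j, A (w j) : ℤ) : ℤ) : ℚ) / ((∑ j, B (w j) : ℤ) : ℚ), ?_⟩
    have hBR : ((∑ j, B (w j) : ℤ) : ℝ) ≠ 0 := by exact_mod_cast hB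
    have hreal' := hreal
    push_cast at hBR hreal'
    push_cast
    rw [div_eq_iff hBR]
    linarith [hreal']
  have hAval : (∑ j, A (w j) : ℤ) = 2^k := by
    have : ((∑ j, A (w j) : ℤ) : ℝ) = 2^k := by
      rw [hBzero] at hreal
      push_cast at hreal ⊢
      linarith
    exact_mod_cast this
  obtain ⟨L, hval, hact⟩ := main_induction k w hAval hBzero
  rw [hu_eq]
  exact ⟨L, hval, hact⟩

/-- Column lemma: for every unit vector `u ∈ 𝔻[ω]^n` there is a finite sequence
`U₁, …, U_h` of one- and two-level matrices of types `X`, `H`, `T`, `ω` with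
`U₁⋯U_h u = e₁`, the first standard basis vector. -/
theorem stmt9 (n : ℕ) (u : Fin n → ℂ) (hu : ∀ j, inDω (u j))
    (hnorm : ∑ j, Complex.normSq (u j) = 1) :
    ∃ L : List (Matrix (Fin n) (Fin n) ℂ),
      (∀ M ∈ L, IsLevelGen M) ∧
      L.prod.mulVec u = fun p : Fin n => if (p : ℕ) = 0 then (1 : ℂ) else 0 := by
  exact stmt9_helper n u hu hnorm
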